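/- arXiv:2506.02340 — 2 statements merged into one kernel-verified Lean document; each statement's English description precedes it below -/
import Mathlib

section
/- For ε ∈ {±1}, define f_ε: ℤ → ℝ by f_ε(2n) = (−1/√6)(−ε√2)^{−n}, f_ε(2n+1) = (1/(2√3))(−ε√2)^{−n} for n ≥ 0, and f_ε(−m−1) = ε f_ε(m) for m ≥ 0. Then f_ε ∈ ℓ²(ℤ), ‖f_ε‖ = 1, and 𝓛^{pr} f_ε = λ_ε f_ε with λ_ε = (5−2ε)/4. -/
open scoped ENNReal NNReal


open Classical in
/-- Pointwise action of the projected normalized Laplacian `𝓛^{pr}` on `ℤ` (real version). -/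
noncomputable def lprFunR (g : ℤ → ℝ) (m : ℤ) : ℝ :=
  if 0 ≤ m then
    if Even m then
      g m - (1/2) * g (m - 1) - (1 / (2 * Real.sqrt 2)) * g (m + 1)
    else
      (3/4) * g m - (1 / (2 * Real.sqrt 2)) * g (m - 1) - (1/2) * g (m + 1)
  else
    if Even (-m - 1) then
      g m - (1/2) * g (m + 1) - (1 / (2 * Real.sqrt 2)) * g (m - 1)
    else
      (3/4) * g m - (1 / (2 * Real.sqrt 2)) * g (m + 1) - (1/2) * g (m - 1)

open Classical in
/-- The eigenfunction `f_ε` on nonnegative arguments: `f_ε(2n) = (-1/√6)(-ε√2)^{-n}`,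
`f_ε(2n+1) = (1/(2√3))(-ε√2)^{-n}`. -/
noncomputable def discEigBase (ε : ℝ) (m : ℤ) : ℝ :=
  if Even m then (-1 / Real.sqrt 6) * (-ε * Real.sqrt 2) ^ (-(m / 2))
  else (1 / (2 * Real.sqrt 3)) * (-ε * Real.sqrt 2) ^ (-((m - 1) / 2))

open Classical in
/-- `f_ε`, extended to negative arguments by `f_ε(-m-1) = ε f_ε(m)`. -/
noncomputable def discEig (ε : ℝ) (m : ℤ) : ℝ :=
  if 0 ≤ m then discEigBase ε m else ε * discEigBase ε (-m - 1)


section Aux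

lemma sqrt6_eq : Real.sqrt 6 = Real.sqrt 2 * Real.sqrt 3 := by
  rw [← Real.sqrt_mul (by norm_num : (0:ℝ) ≤ 2)]; norm_num

lemma discEig_evenZ (ε : ℝ) (k : ℤ) (hk : 0 ≤ k) :
    discEig ε (2 * k) = (-1 / Real.sqrt 6) * (-ε * Real.sqrt 2) ^ (-k) := by
  unfold discEig discEigBase
  rw [if_pos (by omega : (0:ℤ) ≤ 2 * k), if_pos ⟨k, by ring⟩,
    Int.mul_ediv_cancel_left _ (by norm_num)]

lemma discEig_oddZ (ε : ℝ) (k : ℤ) (hk : -1 ≤ k) :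
    discEig ε (2 * k + 1) = (1 / (2 * Real.sqrt 3)) * (-ε * Real.sqrt 2) ^ (-k) := by
  rcases lt_or_eq_of_le hk with h | h
  · have h0 : (0:ℤ) ≤ k := by omega
    unfold discEig discEigBase
    rw [if_pos (by omega : (0:ℤ) ≤ 2 * k + 1),
      if_neg (by simp [Int.even_add_one, Int.even_iff]
        <;> omega),
      show (2 * k + 1 - 1) = 2 * k by ring,
      Int.mul_ediv_cancel_left _ (by norm_num)]
  · subst h
    unfold discEig discEigBase
    norm_num
    have h2 : (0:ℝ) < Real.sqrt 2 := Real.sqrt_pos.2 (by norm_num)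
    have h3 : (0:ℝ) < Real.sqrt 3 := Real.sqrt_pos.2 (by norm_num)
    have h22 : Real.sqrt 2 * Real.sqrt 2 = 2 := Real.mul_self_sqrt (by norm_num)
    rw [sqrt6_eq]
    field_simp
    ring_nf
    linear_combination ε * Real.sq_sqrt (by norm_num : (0:ℝ) ≤ 2)

lemma discEig_symm (ε : ℝ) (hε2 : ε ^ 2 = 1) (k : ℤ) :
    discEig ε (-k - 1) = ε * discEig ε k := by
  unfold discEig
  by_cases h : 0 ≤ k
  · rw [if_neg (by omega), if_pos h, show -(-k - 1) - 1 = k by ring]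
  · rw [if_pos (by omega), if_neg h]
    linear_combination -discEigBase ε (-k - 1) * hε2

end Aux
lemma key_even (ε : ℝ) (hε : ε = 1 ∨ ε = -1) :
    (-1 / Real.sqrt 6) - (1/2) * ((1 / (2 * Real.sqrt 3)) * (-ε * Real.sqrt 2))
      - (1 / (2 * Real.sqrt 2)) * (1 / (2 * Real.sqrt 3))
    = ((5 - 2 * ε) / 4) * (-1 / Real.sqrt 6) := by
  have h2 : (0:ℝ) < Real.sqrt 2 := Real.sqrt_pos.2 (by norm_num)
  have h3 : (0:ℝ) < Real.sqrt 3 := Real.sqrt_pos.2 (by norm_num)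
  have h22 : Real.sqrt 2 * Real.sqrt 2 = 2 := Real.mul_self_sqrt (by norm_num)
  have h33 : Real.sqrt 3 * Real.sqrt 3 = 3 := Real.mul_self_sqrt (by norm_num)
  rw [sqrt6_eq]
  rcases hε with rfl | rfl <;>
    (field_simp
     ring_nf
     try rw [show Real.sqrt 2 ^ 4 = 4 by nlinarith [h22]]
     try rw [show Real.sqrt 2 ^ 2 = 2 by nlinarith [h22]]
     try ring)

lemma key_odd (ε : ℝ) (hε : ε = 1 ∨ ε = -1) :
    (3/4) * ((1 / (2 * Real.sqrt 3)) * (-ε * Real.sqrt 2))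
      - (1 / (2 * Real.sqrt 2)) * ((-1 / Real.sqrt 6) * (-ε * Real.sqrt 2))
      - (1/2) * (-1 / Real.sqrt 6)
    = ((5 - 2 * ε) / 4) * ((1 / (2 * Real.sqrt 3)) * (-ε * Real.sqrt 2)) := by
  have h2 : (0:ℝ) < Real.sqrt 2 := Real.sqrt_pos.2 (by norm_num)
  have h3 : (0:ℝ) < Real.sqrt 3 := Real.sqrt_pos.2 (by norm_num)
  have h22 : Real.sqrt 2 * Real.sqrt 2 = 2 := Real.mul_self_sqrt (by norm_num)
  have h33 : Real.sqrt 3 * Real.sqrt 3 = 3 := Real.mul_self_sqrt (by norm_num)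
  rw [sqrt6_eq]
  rcases hε with rfl | rfl <;>
    (field_simp
     ring_nf
     try rw [show Real.sqrt 2 ^ 4 = 4 by nlinarith [h22]]
     try rw [show Real.sqrt 2 ^ 2 = 2 by nlinarith [h22]]
     try ring)

lemma ha_ne (ε : ℝ) (hε : ε = 1 ∨ ε = -1) : (-ε * Real.sqrt 2) ≠ 0 := by
  have h2 : (0:ℝ) < Real.sqrt 2 := Real.sqrt_pos.2 (by norm_num)
  rcases hε with rfl | rfl <;> simp <;> positivity

lemma eigen_core (ε : ℝ) (hε : ε = 1 ∨ ε = -1) (n : ℤ) (hn : 0 ≤ n) :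
    (if Even n then
      discEig ε n - (1/2) * discEig ε (n - 1)
        - (1 / (2 * Real.sqrt 2)) * discEig ε (n + 1)
    else
      (3/4) * discEig ε n - (1 / (2 * Real.sqrt 2)) * discEig ε (n - 1)
        - (1/2) * discEig ε (n + 1))
    = ((5 - 2 * ε) / 4) * discEig ε n := by
  have ha := ha_ne ε hε
  by_cases he : Even n
  · rw [if_pos he]
    obtain ⟨j, hj⟩ := he
    obtain rfl : n = 2 * j := by omega
    have h0 : (0:ℤ) ≤ j := by omega
    rw [discEig_evenZ ε j h0,
      show 2 * j - 1 = 2 * (j - 1) + 1 by ring, discEig_oddZ ε (j - 1) (by omega),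
      show 2 * j + 1 = 2 * j + 1 from rfl, discEig_oddZ ε j (by omega),
      show -(j - 1) = 1 + (-j) by ring, zpow_add₀ ha, zpow_one]
    linear_combination ((-ε * Real.sqrt 2) ^ (-j)) * key_even ε hε
  · rw [if_neg he]
    obtain ⟨j, hj⟩ := Int.not_even_iff_odd.1 he
    obtain rfl : n = 2 * j + 1 := hj
    have h0 : (0:ℤ) ≤ j := by omega
    rw [discEig_oddZ ε j (by omega),
      show 2 * j + 1 - 1 = 2 * j by ring, discEig_evenZ ε j h0,
      show 2 * j + 1 + 1 = 2 * (j + 1) by ring, discEig_evenZ ε (j + 1) (by omega),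
      show -j = 1 + (-(j + 1)) by ring, zpow_add₀ ha, zpow_one]
    linear_combination ((-ε * Real.sqrt 2) ^ (-(j + 1))) * key_odd ε hε

lemma eigen_all (ε : ℝ) (hε : ε = 1 ∨ ε = -1) (m : ℤ) :
    lprFunR (discEig ε) m = ((5 - 2 * ε) / 4) * discEig ε m := by
  have hε2 : ε ^ 2 = 1 := by rcases hε with rfl | rfl <;> norm_num
  have hsym := discEig_symm ε hε2
  unfold lprFunR
  by_cases hm : 0 ≤ m
  · rw [if_pos hm]
    exact eigen_core ε hε m hm
  · rw [if_neg hm]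
    obtain ⟨n, hn, rfl⟩ : ∃ n, 0 ≤ n ∧ m = -n - 1 := ⟨-m - 1, by omega, by omega⟩
    have hc := eigen_core ε hε n hn
    rw [show -(-n - 1) - 1 = n by ring,
      show (-n - 1 : ℤ) + 1 = -(n - 1) - 1 by ring,
      show (-n - 1 : ℤ) - 1 = -(n + 1) - 1 by ring,
      hsym n, hsym (n - 1), hsym (n + 1)]
    split_ifs at hc ⊢ with h
    · linear_combination ε * hc
    · linear_combination ε * hc

lemma normsq_even (ε : ℝ) (hε : ε = 1 ∨ ε = -1) (k : ℕ) :
    ‖discEig ε ((2 * k : ℕ) : ℤ)‖ ^ (2:ℝ) = (1/6) * (1/2 : ℝ) ^ k := by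
  have hε2 : ε ^ 2 = 1 := by rcases hε with rfl | rfl <;> norm_num
  have ha2 : (-ε * Real.sqrt 2) ^ 2 = 2 := by
    linear_combination 2 * hε2 + ε ^ 2 * Real.sq_sqrt (by norm_num : (0:ℝ) ≤ 2)
  have h6 : (Real.sqrt 6) ^ 2 = 6 := Real.sq_sqrt (by norm_num)
  rw [show ((2 * k : ℕ) : ℤ) = 2 * (k : ℤ) by push_cast; ring,
    discEig_evenZ ε k (by positivity), Real.norm_eq_abs,
    show ∀ x:ℝ, x ^ (2:ℝ) = x ^ (2:ℕ) from fun x => by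
      rw [show (2:ℝ) = ((2:ℕ):ℝ) by norm_num, Real.rpow_natCast], sq_abs,
    zpow_neg, zpow_natCast, mul_pow, inv_pow,
    show ((-ε * Real.sqrt 2) ^ k) ^ 2 = 2 ^ k by rw [← pow_mul, mul_comm k 2, pow_mul, ha2],
    div_pow, h6, one_div (2:ℝ), inv_pow]
  norm_num

lemma normsq_odd (ε : ℝ) (hε : ε = 1 ∨ ε = -1) (k : ℕ) :
    ‖discEig ε ((2 * k + 1 : ℕ) : ℤ)‖ ^ (2:ℝ) = (1/12) * (1/2 : ℝ) ^ k := by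
  have hε2 : ε ^ 2 = 1 := by rcases hε with rfl | rfl <;> norm_num
  have ha2 : (-ε * Real.sqrt 2) ^ 2 = 2 := by
    linear_combination 2 * hε2 + ε ^ 2 * Real.sq_sqrt (by norm_num : (0:ℝ) ≤ 2)
  have h3 : (Real.sqrt 3) ^ 2 = 3 := Real.sq_sqrt (by norm_num)
  rw [show ((2 * k + 1 : ℕ) : ℤ) = 2 * (k : ℤ) + 1 by push_cast; ring,
    discEig_oddZ ε k (by omega), Real.norm_eq_abs,
    show ∀ x:ℝ, x ^ (2:ℝ) = x ^ (2:ℕ) from fun x => by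
      rw [show (2:ℝ) = ((2:ℕ):ℝ) by norm_num, Real.rpow_natCast], sq_abs,
    zpow_neg, zpow_natCast, mul_pow, inv_pow,
    show ((-ε * Real.sqrt 2) ^ k) ^ 2 = 2 ^ k by rw [← pow_mul, mul_comm k 2, pow_mul, ha2],
    div_pow, mul_pow, h3, one_div (2:ℝ), inv_pow]
  norm_num

lemma hasSum_int (ε : ℝ) (hε : ε = 1 ∨ ε = -1) :
    HasSum (fun m : ℤ => ‖discEig ε m‖ ^ (2:ℝ)) 1 := by
  have hε2 : ε ^ 2 = 1 := by rcases hε with rfl | rfl <;> norm_num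
  have habs : |ε| = 1 := by rcases hε with rfl | rfl <;> norm_num
  have hEven : HasSum (fun k : ℕ => ‖discEig ε ((2 * k : ℕ) : ℤ)‖ ^ (2:ℝ)) (1/3) := by
    simp only [normsq_even ε hε]
    have := (hasSum_geometric_of_lt_one (by norm_num : (0:ℝ) ≤ 1/2) (by norm_num)).mul_left
      (1/6 : ℝ)
    rw [show (1/3:ℝ) = 1/6 * (1 - 1/2)⁻¹ by norm_num]
    exact this
  have hOdd : HasSum (fun k : ℕ => ‖discEig ε ((2 * k + 1 : ℕ) : ℤ)‖ ^ (2:ℝ)) (1/6) := by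
    simp only [normsq_odd ε hε]
    have := (hasSum_geometric_of_lt_one (by norm_num : (0:ℝ) ≤ 1/2) (by norm_num)).mul_left
      (1/12 : ℝ)
    rw [show (1/6:ℝ) = 1/12 * (1 - 1/2)⁻¹ by norm_num]
    exact this
  have hNat : HasSum (fun n : ℕ => ‖discEig ε (n : ℤ)‖ ^ (2:ℝ)) (1/2) := by
    have := HasSum.even_add_odd (f := fun n : ℕ => ‖discEig ε (n : ℤ)‖ ^ (2:ℝ)) hEven hOdd
    convert this using 1
    norm_num
  have hsymN : ∀ n : ℕ, ‖discEig ε (-((n : ℤ) + 1))‖ ^ (2:ℝ) = ‖discEig ε (n : ℤ)‖ ^ (2:ℝ) := by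
    intro n
    rw [show -((n : ℤ) + 1) = -(n : ℤ) - 1 by ring, discEig_symm ε hε2, norm_mul,
      Real.norm_eq_abs, habs, one_mul]
  have h2 : HasSum (fun n : ℕ => ‖discEig ε (-((n : ℤ) + 1))‖ ^ (2:ℝ)) (1/2) := by
    simpa only [hsymN] using hNat
  have := HasSum.of_nat_of_neg_add_one (f := fun m : ℤ => ‖discEig ε m‖ ^ (2:ℝ)) hNat h2
  convert this using 1
  norm_num

theorem discrete_eigenfunctions (ε : ℝ) (hε : ε = 1 ∨ ε = -1) :
    Memℓp (fun m : ℤ => discEig ε m) 2 ∧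
    (∃ F : lp (fun _ : ℤ => ℝ) 2,
      (∀ m : ℤ, (F : ∀ _ : ℤ, ℝ) m = discEig ε m) ∧ ‖F‖ = 1) ∧
    (∀ m : ℤ, lprFunR (discEig ε) m = ((5 - 2 * ε) / 4) * discEig ε m) := by
  have hInt := hasSum_int ε hε
  have htr : ((2:ℝ≥0∞)).toReal = (2:ℝ) := by norm_num
  have hmem : Memℓp (fun m : ℤ => discEig ε m) 2 := by
    refine memℓp_gen ?_
    simp only [htr]
    exact hInt.summable
  refine ⟨hmem, ⟨⟨_, hmem⟩, fun m => rfl, ?_⟩, eigen_all ε hε⟩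
  have hn := lp.norm_rpow_eq_tsum (p := 2) (by norm_num) (⟨_, hmem⟩ : lp (fun _ : ℤ => ℝ) 2)
  simp only [htr] at hn
  rw [hInt.tsum_eq] at hn
  rw [show (2:ℝ) = ((2:ℕ) : ℝ) by norm_num, Real.rpow_natCast] at hn
  have hnn : (0:ℝ) ≤ ‖(⟨_, hmem⟩ : lp (fun _ : ℤ => ℝ) 2)‖ := norm_nonneg _
  set x : ℝ := ‖(⟨_, hmem⟩ : lp (fun _ : ℤ => ℝ) 2)‖ with hx
  have hfac : (x - 1) * (x + 1) = 0 := by linear_combination hn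
  rcases mul_eq_zero.1 hfac with h | h
  · linarith
  · linarith
end

section
/- For x ∈ (0,π), the function g(x) := c₁ + c₂ + 2cos(x)·c₃, where c₁ = (1+ε/4−εμR)(1+ε/4−εμ'R) + 1/2, c₂ = (μR+1/4−ε)(μ'R+1/4−ε) + 1/2, c₃ = √2 − (ε/√2)(μ+μ')R, and R² = 25/16 + √2·cos(x), satisfies: g = 0 if μ = −μ', and g = 2R(2R − εμ(2+√2·cos x)) if μ = μ'. Moreover 2R(2R − ε'(2+√2 cos x)) > 0 for any ε' ∈ {±1}. -/
set_option maxHeartbeats 1000000 in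
theorem orthogonality_core (x μ μ' ε : ℝ) (hx : x ∈ Set.Ioo 0 Real.pi)
    (hμ : μ = 1 ∨ μ = -1) (hμ' : μ' = 1 ∨ μ' = -1) (hε : ε = 1 ∨ ε = -1) :
    let R := Real.sqrt (25/16 + Real.sqrt 2 * Real.cos x)
    let c1 := (1 + ε/4 - ε * μ * R) * (1 + ε/4 - ε * μ' * R) + 1/2
    let c2 := (μ * R + 1/4 - ε) * (μ' * R + 1/4 - ε) + 1/2
    let c3 := Real.sqrt 2 - (ε / Real.sqrt 2) * (μ + μ') * R
    let g := c1 + c2 + 2 * Real.cos x * c3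
    (μ = -μ' → g = 0) ∧
    (μ = μ' → g = 2 * R * (2 * R - ε * μ * (2 + Real.sqrt 2 * Real.cos x))) ∧
    (∀ ε' : ℝ, (ε' = 1 ∨ ε' = -1) →
      0 < 2 * R * (2 * R - ε' * (2 + Real.sqrt 2 * Real.cos x))) := by
  intro R c1 c2 c3 g
  have h2 : Real.sqrt 2 * Real.sqrt 2 = 2 := Real.mul_self_sqrt (by norm_num)
  have h2pos : (0:ℝ) < Real.sqrt 2 := Real.sqrt_pos.mpr (by norm_num)
  have hc1 : Real.cos x ≤ 1 := Real.cos_le_one x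
  have hc2 : -1 ≤ Real.cos x := Real.neg_one_le_cos x
  have hrad : (0:ℝ) ≤ 25/16 + Real.sqrt 2 * Real.cos x := by nlinarith
  have hR2 : R * R = 25/16 + Real.sqrt 2 * Real.cos x := Real.mul_self_sqrt hrad
  have hR0 : 0 ≤ R := Real.sqrt_nonneg _
  have hgdef : g = c1 + c2 + 2 * Real.cos x * c3 := rfl
  have hc1def : c1 = (1 + ε/4 - ε * μ * R) * (1 + ε/4 - ε * μ' * R) + 1/2 := rfl
  have hc2def : c2 = (μ * R + 1/4 - ε) * (μ' * R + 1/4 - ε) + 1/2 := rfl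
  have hc3def : c3 = Real.sqrt 2 - (ε / Real.sqrt 2) * (μ + μ') * R := rfl
  clear_value g c3 c2 c1 R
  have hdiv : ∀ a : ℝ, a / Real.sqrt 2 = a * Real.sqrt 2 / 2 := by
    intro a
    rw [div_eq_div_iff h2pos.ne' two_ne_zero, mul_assoc, h2]
  refine ⟨?_, ?_, ?_⟩
  · intro h
    rw [hgdef, hc1def, hc2def, hc3def]
    simp only [hdiv]
    subst h
    rcases hμ' with h' | h' <;> rcases hε with he | he <;> subst h' <;> subst he <;>
      linear_combination (-2) * hR2
  · intro h
    rw [hgdef, hc1def, hc2def, hc3def]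
    simp only [hdiv]
    subst h
    rcases hμ' with h' | h' <;> rcases hε with he | he <;> subst h' <;> subst he <;>
      linear_combination (-2) * hR2
  · intro ε' hε'
    have hs2 : (Real.sqrt 2 * Real.cos x) * (Real.sqrt 2 * Real.cos x)
        = 2 * (Real.cos x * Real.cos x) := by
      linear_combination (Real.cos x * Real.cos x) * h2
    have hcc : (1 - Real.cos x) * (1 + Real.cos x) ≥ 0 :=
      mul_nonneg (by linarith) (by linarith)
    have hkey : (2 + Real.sqrt 2 * Real.cos x) * (2 + Real.sqrt 2 * Real.cos x)
        < 2 * R * (2 * R) := by nlinarith [hR2, hs2, hcc]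
    have hlt2 : Real.sqrt 2 < 2 := by
      nlinarith [h2, h2pos]
    have hmul : 0 ≤ Real.sqrt 2 * Real.cos x + Real.sqrt 2 := by
      have := mul_nonneg h2pos.le (show (0:ℝ) ≤ Real.cos x + 1 by linarith)
      linarith [mul_add (Real.sqrt 2) (Real.cos x) 1, this]
    have hpos : 0 < 2 + Real.sqrt 2 * Real.cos x := by
      nlinarith [hlt2, hmul]
    have hRpos : 0 < R := by nlinarith [hkey, hpos, hR0]
    have h2R : 2 + Real.sqrt 2 * Real.cos x < 2 * R := by
      refine lt_of_pow_lt_pow_left₀ 2 (by linarith) ?_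
      rw [pow_two, pow_two]; exact hkey
    rcases hε' with h | h <;> subst h
    · nlinarith [mul_pos (show (0:ℝ) < 2 * R by linarith)
        (show (0:ℝ) < 2 * R - (2 + Real.sqrt 2 * Real.cos x) by linarith)]
    · nlinarith [mul_pos (show (0:ℝ) < 2 * R by linarith)
        (show (0:ℝ) < 2 * R + (2 + Real.sqrt 2 * Real.cos x) by linarith)]
end
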